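/- Let α, β > 0 and ε ∈ ℝ, and let f_μ(x) = (β/(2α·Γ(1/β)))·exp(−(|x−μ|/α)^β) denote the symmetric generalized Gaussian density with location μ, scale α, and shape β. Set p = f_0 and q = f_ε, and suppose χ := ∫_ℝ q(x)²/p(x) dx = E_q[exp(−(|B−ε|^β − |B|^β)/α^β)] < ∞. Given an integer d ≥ 1 and group sizes m₁,…,m_d ∈ ℕ with N = m₁+…+m_d, define probability measures on ℝ^N (coordinates indexed by pairs (j,k), j ∈ {1,…,d}, k ∈ {1,…,m_j}): Q has density ∏_{j=1}^d ∏_{k=1}^{m_j} p(b_j^{(k)}), and P has density (1/d) ∑_{j=1}^d [∏_{k=1}^{m_j} q(b_j^{(k)})] · ∏_{j'≠j} ∏_{k=1}^{m_{j'}} p(b_{j'}^{(k)}). Then TV(P, Q) ≤ (1/(2√d)) · [ (1/d) ∑_{j=1}^d χ^{m_j} − 1 ]^{1/2}. -/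

import Mathlib

open MeasureTheory

/-- Total variation distance between two measures:
`TV(P, Q) = sup over measurable sets s of |P s - Q s|`. -/
noncomputable def tvDist {Ω : Type*} [MeasurableSpace Ω] (P Q : Measure Ω) : ℝ :=
  ⨆ s : {s : Set Ω // MeasurableSet s}, |(P s.1).toReal - (Q s.1).toReal|



open Real Set in
lemma aux_intOn {β : ℝ} (hβ : 0 < β) :
    IntegrableOn (fun x : ℝ => Real.exp (-x ^ β)) (Ioi 0) := by
  have h := (integrableOn_Ioi_comp_rpow_iff' (fun x : ℝ => Real.exp (-x ^ β))
    (p := β⁻¹) (inv_ne_zero hβ.ne')).mp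
  apply h
  have hG := Real.GammaIntegral_convergent (s := β⁻¹) (by positivity)
  apply hG.congr_fun ?_ measurableSet_Ioi
  intro x hx
  rw [mem_Ioi] at hx
  simp only [smul_eq_mul, ← Real.rpow_natCast]
  rw [← Real.rpow_mul hx.le, inv_mul_cancel₀ hβ.ne', Real.rpow_one, mul_comm]

open Real Set in
lemma aux_int_abs {β : ℝ} (hβ : 0 < β) (α : ℝ) (hα : 0 < α) :
    Integrable (fun x : ℝ => Real.exp (-(|x| / α) ^ β)) := by
  have hIoi : IntegrableOn (fun x : ℝ => Real.exp (-(|x| / α) ^ β)) (Ioi 0) := by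
    have h2 : IntegrableOn (fun x : ℝ => Real.exp (-(α⁻¹ * x) ^ β)) (Ioi 0) := by
      have := (integrableOn_Ioi_comp_mul_left_iff
        (fun x : ℝ => Real.exp (-x ^ β)) 0 (inv_pos.mpr hα)).mpr
      simpa using this (by simpa using aux_intOn hβ)
    apply h2.congr_fun ?_ measurableSet_Ioi
    intro x hx
    rw [mem_Ioi] at hx
    simp only []
    rw [abs_of_pos hx, div_eq_inv_mul]
  have hIic : IntegrableOn (fun x : ℝ => Real.exp (-(|x| / α) ^ β)) (Iic 0) := by
    rw [← Measure.map_neg_eq_self (volume : Measure ℝ)]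
    let m : MeasurableEmbedding fun x : ℝ => -x := (Homeomorph.neg ℝ).measurableEmbedding
    rw [m.integrableOn_map_iff]
    simp_rw [Function.comp_def, abs_neg, neg_preimage, neg_Iic, neg_zero]
    exact Iff.mpr integrableOn_Ici_iff_integrableOn_Ioi hIoi
  have := hIic.union hIoi
  rwa [Iic_union_Ioi, integrableOn_univ] at this

open Real Set in
lemma aux_int_val {β : ℝ} (hβ : 0 < β) (α : ℝ) (hα : 0 < α) :
    ∫ x : ℝ, Real.exp (-(|x| / α) ^ β) = 2 * α * Real.Gamma (1 / β) / β := by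
  have h1 : ∀ x : ℝ, Real.exp (-(|x| / α) ^ β)
      = (fun y => Real.exp (-(|y|) ^ β)) (x / α) := by
    intro x
    simp only [abs_div, abs_of_pos hα]
  simp_rw [h1]
  rw [MeasureTheory.Measure.integral_comp_div (fun y => Real.exp (-(|y|) ^ β)) α]
  rw [integral_comp_abs (f := fun y => Real.exp (-y ^ β)), integral_exp_neg_rpow hβ,
    Real.Gamma_add_one (by positivity : (1:ℝ)/β ≠ 0)]
  rw [abs_of_pos hα, smul_eq_mul]
  field_simp


open Real Set in
lemma aux_tv_le {X : Type*} [MeasurableSpace X] (μ : Measure X) (fP fQ : X → ℝ)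
    (hfP : Integrable fP μ) (hfQ : Integrable fQ μ)
    (hfP0 : ∀ x, 0 ≤ fP x) (hfQ0 : ∀ x, 0 ≤ fQ x)
    (heq : ∫ x, fP x ∂μ = ∫ x, fQ x ∂μ) :
    tvDist (μ.withDensity fun x => ENNReal.ofReal (fP x))
        (μ.withDensity fun x => ENNReal.ofReal (fQ x)) ≤
      (1 / 2) * ∫ x, |fP x - fQ x| ∂μ := by
  apply ciSup_le
  rintro ⟨s, hs⟩
  have happ : ∀ (f : X → ℝ), Integrable f μ → (∀ x, 0 ≤ f x) →
      ((μ.withDensity fun x => ENNReal.ofReal (f x)) s).toReal = ∫ x in s, f x ∂μ := by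
    intro f hf hf0
    rw [withDensity_apply _ hs, ← ofReal_integral_eq_lintegral_ofReal hf.integrableOn
      (Filter.Eventually.of_forall hf0), ENNReal.toReal_ofReal
      (integral_nonneg hf0)]
  rw [happ fP hfP hfP0, happ fQ hfQ hfQ0]
  set h : X → ℝ := fun x => fP x - fQ x with hh
  have hint : Integrable h μ := hfP.sub hfQ
  have h0 : ∫ x in s, h x ∂μ + ∫ x in sᶜ, h x ∂μ = 0 := by
    rw [integral_add_compl hs hint]
    simp [hh, integral_sub hfP hfQ, heq]
  have hd : ∫ x in s, fP x ∂μ - ∫ x in s, fQ x ∂μ = ∫ x in s, h x ∂μ := by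
    rw [integral_sub hfP.integrableOn hfQ.integrableOn]
  rw [hd]
  have h2 : |∫ x in s, h x ∂μ| = (|∫ x in s, h x ∂μ| + |∫ x in sᶜ, h x ∂μ|) / 2 := by
    have : ∫ x in sᶜ, h x ∂μ = -∫ x in s, h x ∂μ := by linarith
    rw [this, abs_neg]; ring
  rw [h2]
  have h3 : ∀ (t : Set X), |∫ x in t, h x ∂μ| ≤ ∫ x in t, |h x| ∂μ := by
    intro t
    simpa [Real.norm_eq_abs] using
      norm_integral_le_integral_norm (μ := μ.restrict t) h
  have h4 : ∫ x in s, |h x| ∂μ + ∫ x in sᶜ, |h x| ∂μ = ∫ x, |h x| ∂μ :=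
    integral_add_compl hs hint.abs
  have := h3 s
  have := h3 sᶜ
  linarith

open Real Set in
lemma aux_cs {X : Type*} [MeasurableSpace X] (μ : Measure X) (h w : X → ℝ)
    (hw0 : ∀ x, 0 < w x) (hw : Integrable w μ) (hwint : ∫ x, w x ∂μ = 1)
    (hh : Integrable h μ) (hX : Integrable (fun x => h x ^ 2 / w x) μ) :
    (∫ x, |h x| ∂μ) ^ 2 ≤ ∫ x, h x ^ 2 / w x ∂μ := by
  set c := ∫ x, |h x| ∂μ with hc
  have hptw : ∀ x, h x ^ 2 / w x - 2 * c * |h x| + c ^ 2 * w x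
      = (|h x| - c * w x) ^ 2 / w x := by
    intro x
    have hwx := (hw0 x).ne'
    field_simp
    linear_combination (c ^ 2 * w x * w x - 2 * c * |h x| * w x) * (0 : ℝ) - sq_abs (h x)
  have key : 0 ≤ ∫ x, (h x ^ 2 / w x - 2 * c * |h x| + c ^ 2 * w x) ∂μ := by
    apply integral_nonneg
    intro x
    simp only [Pi.zero_apply]
    rw [hptw x]
    exact div_nonneg (sq_nonneg _) (hw0 x).le
  have hsplit : ∫ x, (h x ^ 2 / w x - 2 * c * |h x| + c ^ 2 * w x) ∂μ
      = (∫ x, h x ^ 2 / w x ∂μ) - 2 * c * c + c ^ 2 := by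
    have i1 : Integrable (fun x => h x ^ 2 / w x - 2 * c * |h x|) μ :=
      hX.sub ((hh.abs).const_mul (2 * c))
    have i2 : Integrable (fun x => c ^ 2 * w x) μ := hw.const_mul (c ^ 2)
    rw [integral_add i1 i2, integral_sub hX ((hh.abs).const_mul (2 * c)),
      integral_const_mul, integral_const_mul, hwint]
    ring
  rw [hsplit] at key
  nlinarith [key]

set_option maxHeartbeats 1000000 in
/-- Symmetric generalized Gaussian version of the TV bound: with
`f_μ(x) = (β/(2αΓ(1/β)))·exp(-(|x-μ|/α)^β)`, `p = f₀`, `q = f_ε`, and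
`χ = ∫ q²/p < ∞`, let `Q` be the product measure on `ℝ^N` (coordinates indexed by `(j,k)`,
`j < d`, `k < m j`) with all coordinates of density `p`, and `P` the measure with density
`(1/d) ∑_j ∏_k q(b_j^{(k)}) ∏_{j'≠j} ∏_k p(b_{j'}^{(k)})`. Then
`TV(P, Q) ≤ (1/(2√d)) · ((1/d) ∑_j χ^{m_j} - 1)^{1/2}`. -/
theorem tv_bound_mixture_gen_gaussian (α β ε : ℝ) (hα : 0 < α) (hβ : 0 < β)
    (p q : ℝ → ℝ)
    (hp : ∀ x, p x = (β / (2 * α * Real.Gamma (1 / β))) *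
      Real.exp (-(|x - 0| / α) ^ β))
    (hq : ∀ x, q x = (β / (2 * α * Real.Gamma (1 / β))) *
      Real.exp (-(|x - ε| / α) ^ β))
    (χ : ℝ) (hχint : Integrable (fun x => (q x) ^ 2 / p x))
    (hχ : χ = ∫ x, (q x) ^ 2 / p x)
    (d : ℕ) (hd : 1 ≤ d) (m : Fin d → ℕ)
    (P Q : Measure (((j : Fin d) × Fin (m j)) → ℝ))
    (hQ : Q = volume.withDensity fun b => ENNReal.ofReal (∏ i, p (b i)))
    (hP : P = volume.withDensity fun b => ENNReal.ofReal
      ((1 / d : ℝ) * ∑ j : Fin d,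
        (∏ k : Fin (m j), q (b ⟨j, k⟩)) *
          ∏ j' ∈ Finset.univ.erase j, ∏ k : Fin (m j'), p (b ⟨j', k⟩))) :
    tvDist P Q ≤
      (1 / (2 * Real.sqrt d)) * Real.sqrt ((1 / d : ℝ) * ∑ j, χ ^ (m j) - 1) := by
  classical
  have hdR : (0:ℝ) < (d:ℝ) := by exact_mod_cast hd
  -- scalar facts
  have hΓpos : 0 < Real.Gamma (1/β) := Real.Gamma_pos_of_pos (by positivity)
  set C := β / (2 * α * Real.Gamma (1 / β)) with hC
  have hCpos : 0 < C := by rw [hC]; positivity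
  have hp' : p = fun x => C * Real.exp (-(|x| / α) ^ β) := by
    funext x; rw [hp x]; norm_num
  have hq' : ∀ x, q x = p (x - ε) := by
    intro x; rw [hq x, hp']
  have hppos : ∀ x, 0 < p x := fun x => by rw [hp']; positivity
  have hqpos : ∀ x, 0 < q x := fun x => by rw [hq' x]; exact hppos _
  have hip : Integrable p := by
    rw [hp']; exact (aux_int_abs hβ α hα).const_mul C
  have hintp : ∫ x, p x = 1 := by
    rw [hp', integral_const_mul, aux_int_val hβ α hα, hC]
    field_simp
  have hiq : Integrable q := by
    have : q = fun x => p (x - ε) := funext hq'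
    rw [this]; exact hip.comp_sub_right ε
  have hintq : ∫ x, q x = 1 := by
    have : q = fun x => p (x - ε) := funext hq'
    rw [this, integral_sub_right_eq_self p ε]; exact hintp
  have hintχ : ∫ x, q x ^ 2 / p x = χ := hχ.symm
  -- densities on the product space
  set fQ : (((j : Fin d) × Fin (m j)) → ℝ) → ℝ := fun b => ∏ i, p (b i) with hfQ
  set fP : (((j : Fin d) × Fin (m j)) → ℝ) → ℝ := fun b =>
    (1 / d : ℝ) * ∑ j : Fin d,
      (∏ k : Fin (m j), q (b ⟨j, k⟩)) *
        ∏ j' ∈ Finset.univ.erase j, ∏ k : Fin (m j'), p (b ⟨j', k⟩) with hfP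
  have hQ' : Q = volume.withDensity fun b => ENNReal.ofReal (fQ b) := hQ
  have hP' : P = volume.withDensity fun b => ENNReal.ofReal (fP b) := hP
  -- per-block densities
  set g : Fin d → (((j : Fin d) × Fin (m j)) → ℝ) → ℝ := fun j b =>
    ∏ i, (if i.1 = j then q else p) (b i) with hg
  have hfPg : ∀ b, fP b = (1 / d : ℝ) * ∑ j, g j b := by
    intro b
    rw [hfP, hg]
    dsimp only
    congr 1
    refine Finset.sum_congr rfl fun j _ => ?_
    rw [← Finset.univ_sigma_univ, Finset.prod_sigma,
      ← Finset.mul_prod_erase Finset.univ _ (Finset.mem_univ j)]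
    congr 1
    · exact Finset.prod_congr rfl fun k _ => by rw [if_pos rfl]
    · refine Finset.prod_congr rfl fun a ha => ?_
      exact Finset.prod_congr rfl fun k _ => by
        rw [if_neg (Finset.ne_of_mem_erase ha)]
  -- coordinate factor functions for pairs
  set cf : Fin d → Fin d → Fin d → ℝ → ℝ := fun j j' l =>
    if l = j then (if l = j' then (fun x => q x ^ 2 / p x) else q)
    else (if l = j' then q else p) with hcf
  have hcf_int : ∀ j j' l, Integrable (cf j j' l) := by
    intro j j' l; rw [hcf]; dsimp only
    split_ifs <;> first | exact hχint | exact hiq | exact hip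
  have hcf_val : ∀ j j' l, ∫ x, cf j j' l x =
      if l = j ∧ l = j' then χ else 1 := by
    intro j j' l; rw [hcf]; dsimp only
    by_cases h1 : l = j <;> by_cases h2 : l = j'
    · rw [if_pos h1, if_pos h2, if_pos ⟨h1, h2⟩]; exact hintχ
    · rw [if_pos h1, if_neg h2, if_neg (fun hh => h2 hh.2)]; exact hintq
    · rw [if_neg h1, if_pos h2, if_neg (fun hh => h1 hh.1)]; exact hintq
    · rw [if_neg h1, if_neg h2, if_neg (fun hh => h1 hh.1)]; exact hintp
  set T : Fin d → Fin d → (((j : Fin d) × Fin (m j)) → ℝ) → ℝ := fun j j' b =>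
    ∏ i, cf j j' i.1 (b i) with hT
  have hgT : ∀ j j' b, g j b * g j' b / fQ b = T j j' b := by
    intro j j' b
    rw [hg, hT, hfQ, hcf]
    dsimp only
    rw [← Finset.prod_mul_distrib, ← Finset.prod_div_distrib]
    refine Finset.prod_congr rfl fun i _ => ?_
    by_cases h1 : i.1 = j <;> by_cases h2 : i.1 = j'
    · simp only [if_pos h1, if_pos h2]
      rw [sq]
    · simp only [if_pos h1, if_neg h2]
      rw [mul_div_assoc, div_self (hppos _).ne', mul_one]
    · simp only [if_neg h1, if_pos h2]
      rw [mul_comm, mul_div_assoc, div_self (hppos _).ne', mul_one]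
    · simp only [if_neg h1, if_neg h2]
      rw [mul_div_assoc, div_self (hppos _).ne', mul_one]
  have hT_int : ∀ j j', Integrable (T j j') := by
    intro j j'
    exact Integrable.fintype_prod_dep (f := fun i : (j : Fin d) × Fin (m j) => cf j j' i.1) (fun i => hcf_int j j' i.1)
  have hT_val : ∀ j j', ∫ b, T j j' b = if j = j' then χ ^ (m j) else 1 := by
    intro j j'
    rw [hT]
    dsimp only
    rw [MeasureTheory.integral_fintype_prod_volume_eq_prod
      (fun i : (j : Fin d) × Fin (m j) => cf j j' i.1)]
    simp_rw [hcf_val j j']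
    rw [← Finset.univ_sigma_univ, Finset.prod_sigma]
    by_cases hjj : j = j'
    · subst hjj
      rw [if_pos rfl]
      have : ∀ a : Fin d, (∏ k : Fin (m a), if a = j ∧ a = j then χ else 1)
          = if a = j then χ ^ (m a) else 1 := by
        intro a
        by_cases ha : a = j
        · rw [if_pos ha]
          simp [ha]
        · rw [if_neg ha]
          simp [ha]
      simp_rw [this]
      rw [Finset.prod_ite_eq' Finset.univ j (fun a => χ ^ (m a))]
      simp
    · rw [if_neg hjj]
      apply Finset.prod_eq_one
      intro a _
      apply Finset.prod_eq_one
      intro k _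
      rw [if_neg]
      rintro ⟨rfl, rfl⟩
      exact hjj rfl
  have hg_int : ∀ j, Integrable (g j) := by
    intro j
    exact Integrable.fintype_prod_dep (f := fun i : (j : Fin d) × Fin (m j) => if i.1 = j then q else p)
      (fun i => by dsimp only; split_ifs <;> [exact hiq; exact hip])
  have hg_val : ∀ j, ∫ b, g j b = 1 := by
    intro j
    rw [hg]; dsimp only
    rw [MeasureTheory.integral_fintype_prod_volume_eq_prod (fun i : (j : Fin d) × Fin (m j) => if i.1 = j then q else p)]
    apply Finset.prod_eq_one
    intro i _
    split_ifs <;> [exact hintq; exact hintp]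
  have hfQ_pos : ∀ b, 0 < fQ b := fun b => Finset.prod_pos fun i _ => hppos _
  have hfQ_int : Integrable fQ :=
    Integrable.fintype_prod_dep (f := fun _ : (j : Fin d) × Fin (m j) => p) (fun _ => hip)
  have hfQ_val : ∫ b, fQ b = 1 := by
    rw [hfQ]
    rw [MeasureTheory.integral_fintype_prod_volume_eq_prod (fun _ : (j : Fin d) × Fin (m j) => p)]
    simp [hintp]
  have hfP_int : Integrable fP := by
    have : fP = fun b => (1 / d : ℝ) * ∑ j, g j b := funext hfPg
    rw [this]
    exact (integrable_finset_sum _ (fun j _ => hg_int j)).const_mul _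
  have hfP_val : ∫ b, fP b = 1 := by
    have : fP = fun b => (1 / d : ℝ) * ∑ j, g j b := funext hfPg
    rw [this, integral_const_mul, integral_finset_sum _ (fun j _ => hg_int j)]
    simp only [hg_val, Finset.sum_const, Finset.card_univ, Fintype.card_fin, nsmul_eq_mul, mul_one]
    field_simp
  -- the chi-square quantity
  set S : ℝ := ∑ j, χ ^ (m j) with hS
  have hsq : ∀ b, fP b ^ 2 / fQ b = (1 / d : ℝ)^2 * ∑ j, ∑ j', T j j' b := by
    intro b
    rw [hfPg b, mul_pow, pow_two (∑ j, g j b), Finset.sum_mul_sum, mul_div_assoc]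
    congr 1
    rw [Finset.sum_div]
    refine Finset.sum_congr rfl fun j _ => ?_
    rw [Finset.sum_div]
    exact Finset.sum_congr rfl fun j' _ => hgT j j' b
  have hsq_int : Integrable (fun b => fP b ^ 2 / fQ b) := by
    have : (fun b => fP b ^ 2 / fQ b)
        = fun b => (1 / d : ℝ)^2 * ∑ j, ∑ j', T j j' b := funext hsq
    rw [this]
    exact (integrable_finset_sum _ (fun j _ =>
      integrable_finset_sum _ (fun j' _ => hT_int j j'))).const_mul _
  have hsq_val : ∫ b, fP b ^ 2 / fQ b = (1 / d : ℝ)^2 * S + 1 - 1/d := by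
    simp_rw [hsq]
    rw [integral_const_mul, integral_finset_sum _ (fun j _ =>
      integrable_finset_sum _ (fun j' _ => hT_int j j'))]
    have step : ∀ j : Fin d, (∫ b, ∑ j', T j j' b) = ∑ j' : Fin d, ∫ b, T j j' b :=
      fun j => integral_finset_sum _ (fun j' _ => hT_int j j')
    simp_rw [step, hT_val]
    have inner : ∀ j : Fin d, (∑ j' : Fin d, if j = j' then χ ^ (m j) else 1)
        = χ ^ (m j) + ((d : ℝ) - 1) := by
      intro j
      have hsplit : ∀ j' : Fin d, (if j = j' then χ ^ (m j) else 1)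
          = (if j = j' then χ ^ (m j) - 1 else 0) + 1 := by
        intro j'; split_ifs <;> ring
      simp_rw [hsplit]
      rw [Finset.sum_add_distrib, Finset.sum_ite_eq Finset.univ j
        (fun _ => χ ^ (m j) - 1)]
      simp
      ring
    simp_rw [inner]
    rw [Finset.sum_add_distrib, Finset.sum_const, Finset.card_univ, Fintype.card_fin, ← hS]
    have hdne : (d : ℝ) ≠ 0 := hdR.ne'
    field_simp
    ring
  -- Cauchy-Schwarz setup
  set h : (((j : Fin d) × Fin (m j)) → ℝ) → ℝ := fun b => fP b - fQ b with hhdef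
  have hh_int : Integrable h := hfP_int.sub hfQ_int
  have hX_ptw : ∀ b, h b ^ 2 / fQ b = fP b ^ 2 / fQ b - 2 * fP b + fQ b := by
    intro b
    have hb := (hfQ_pos b).ne'
    rw [hhdef]; dsimp only
    field_simp
    ring
  have hX_int : Integrable (fun b => h b ^ 2 / fQ b) := by
    have : (fun b => h b ^ 2 / fQ b)
        = fun b => fP b ^ 2 / fQ b - 2 * fP b + fQ b := funext hX_ptw
    rw [this]
    exact (hsq_int.sub (hfP_int.const_mul 2)).add hfQ_int
  have hX_val : ∫ b, h b ^ 2 / fQ b = (1/d : ℝ) * ((1/d) * S - 1) := by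
    have : (fun b => h b ^ 2 / fQ b)
        = fun b => fP b ^ 2 / fQ b - 2 * fP b + fQ b := funext hX_ptw
    have i1 : Integrable (fun b => fP b ^ 2 / fQ b - 2 * fP b) :=
      hsq_int.sub (hfP_int.const_mul 2)
    have i2 : Integrable (fun b => 2 * fP b) := hfP_int.const_mul 2
    rw [this, integral_add i1 hfQ_int, integral_sub hsq_int i2, integral_const_mul,
      hsq_val, hfP_val, hfQ_val]
    field_simp
    ring
  have hCS := aux_cs volume h fQ hfQ_pos hfQ_int hfQ_val hh_int hX_int
  rw [hX_val] at hCS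
  have hTV := aux_tv_le volume fP fQ hfP_int hfQ_int
    (fun b => le_of_lt (by
      have : 0 < fP b := by
        rw [hfPg b]
        have : ∀ j : Fin d, (0:ℝ) < g j b := fun j => Finset.prod_pos fun i _ => by
          by_cases hij : i.fst = j
          · rw [if_pos hij]; exact hqpos _
          · rw [if_neg hij]; exact hppos _
        have hsum : (0:ℝ) < ∑ j, g j b := Finset.sum_pos (fun j _ => this j) ⟨⟨0, hd⟩, Finset.mem_univ _⟩
        positivity
      exact this))
    (fun b => (hfQ_pos b).le) (by rw [hfP_val, hfQ_val])
  rw [← hP', ← hQ'] at hTV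
  -- conclude
  set c : ℝ := ∫ b, |h b| with hcdef
  have hc0 : 0 ≤ c := integral_nonneg fun b => abs_nonneg _
  have hXnn : (0:ℝ) ≤ (1/d : ℝ) * ((1/d) * S - 1) := by
    rw [← hX_val]
    exact integral_nonneg fun b => div_nonneg (sq_nonneg _) (hfQ_pos b).le
  have hA1 : (0:ℝ) ≤ (1/d : ℝ) * S - 1 := by
    by_contra hcon
    push_neg at hcon
    have hdi : (0:ℝ) < 1 / (d:ℝ) := by positivity
    nlinarith
  have hcle : c ≤ Real.sqrt ((1/d : ℝ) * ((1/d) * S - 1)) := by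
    exact (Real.le_sqrt hc0 hXnn).mpr hCS
  have hsqrt : Real.sqrt ((1/d : ℝ) * ((1/d) * S - 1))
      = (1 / Real.sqrt d) * Real.sqrt ((1/d) * S - 1) := by
    rw [Real.sqrt_mul (by positivity), one_div, one_div, Real.sqrt_inv]
  calc tvDist P Q ≤ (1/2) * c := hTV
    _ ≤ (1/2) * ((1 / Real.sqrt d) * Real.sqrt ((1/d) * S - 1)) := by
        rw [← hsqrt]; linarith [hcle]
    _ = (1 / (2 * Real.sqrt d)) * Real.sqrt ((1 / d : ℝ) * S - 1) := by
        rw [← mul_assoc, div_mul_div_comm, one_mul]
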